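/- For all real numbers a, b with 0 < a ≤ b and p > 1, one has (b^(p-1) - a^(p-1))/(p-1) ≤ (b - a)*(b^p + a^p)/(2*a*b). -/

import Mathlib

open Set Real MeasureTheory intervalIntegral

lemma convexOn_rpow_neg' {p : ℝ} (hp : 0 ≤ p) :
    ConvexOn ℝ (Set.Ioi (0:ℝ)) (fun t : ℝ => t ^ (-p)) := by
  refine ⟨convex_Ioi 0, fun x hx y hy r s hr hs hrs => ?_⟩
  have hx0 : (0:ℝ) < x := hx
  have hy0 : (0:ℝ) < y := hy
  have hxy : (0:ℝ) < r • x + s • y := (convex_Ioi (0:ℝ)) hx hy hr hs hrs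
  simp only [smul_eq_mul] at *
  rw [Real.rpow_def_of_pos hxy, Real.rpow_def_of_pos hx0, Real.rpow_def_of_pos hy0]
  have hlog : r * Real.log x + s * Real.log y ≤ Real.log (r * x + s * y) := by
    have := strictConcaveOn_log_Ioi.concaveOn.2 hx hy hr hs hrs
    simpa [smul_eq_mul] using this
  calc Real.exp (Real.log (r * x + s * y) * -p)
      ≤ Real.exp ((r * Real.log x + s * Real.log y) * -p) := by
        apply Real.exp_le_exp.2
        exact mul_le_mul_of_nonpos_right hlog (neg_nonpos.2 hp)
    _ = Real.exp (r * (Real.log x * -p) + s * (Real.log y * -p)) := by ring_nf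
    _ ≤ r * Real.exp (Real.log x * -p) + s * Real.exp (Real.log y * -p) := by
        have := convexOn_exp.2 (Set.mem_univ (Real.log x * -p))
          (Set.mem_univ (Real.log y * -p)) hr hs hrs
        simpa [smul_eq_mul] using this

lemma comb_aux {c d : ℝ} (h : c < d) (t : ℝ) :
    ((d - t) / (d - c)) * c + ((t - c) / (d - c)) * d = t := by
  have hdc : d - c ≠ 0 := sub_ne_zero.2 h.ne'
  field_simp
  ring

lemma chord_aux {c d : ℝ} (h : c < d) (t X Y : ℝ) :
    ((d - t) / (d - c)) * X + ((t - c) / (d - c)) * Y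
      = X + (t - c) * ((Y - X) / (d - c)) := by
  have hdc : d - c ≠ 0 := sub_ne_zero.2 h.ne'
  field_simp
  ring

lemma lin_aux (e C D : ℝ) (he : e ≠ 0) :
    e * C + e ^ 2 / 2 * ((D - C) / e) = e * (C + D) / 2 := by
  field_simp
  ring

/-- Convexity estimate for t ↦ t^(-p). -/
theorem convexity_estimate (a b p : ℝ) (ha : 0 < a) (hab : a ≤ b) (hp : 1 < p) :
    (b ^ (p - 1) - a ^ (p - 1)) / (p - 1) ≤ (b - a) * (b ^ p + a ^ p) / (2 * a * b) := by
  rcases eq_or_lt_of_le hab with rfl | hab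
  · simp
  have hb : (0:ℝ) < b := ha.trans hab
  have hc0 : (0:ℝ) < b⁻¹ := inv_pos.2 hb
  have hd0 : (0:ℝ) < a⁻¹ := inv_pos.2 ha
  have hcd : b⁻¹ < a⁻¹ := by
    apply inv_strictAnti₀ ha hab
  have hdc0 : (0:ℝ) < a⁻¹ - b⁻¹ := sub_pos.2 hcd
  have hnot : (0:ℝ) ∉ Set.uIcc b⁻¹ a⁻¹ := by
    rw [Set.mem_uIcc]
    push_neg
    exact ⟨fun h => absurd h (not_le.2 hc0), fun h => absurd h (not_le.2 hd0)⟩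
  -- pointwise chord bound
  have hpoint : ∀ t ∈ Set.Icc b⁻¹ a⁻¹, t ^ (-p) ≤
      (b⁻¹ : ℝ) ^ (-p) + (t - b⁻¹) * (((a⁻¹:ℝ) ^ (-p) - (b⁻¹:ℝ) ^ (-p)) / (a⁻¹ - b⁻¹)) := by
    intro t ht
    obtain ⟨htc, htd⟩ := ht
    have hr0 : 0 ≤ (a⁻¹ - t) / (a⁻¹ - b⁻¹) := div_nonneg (by linarith) hdc0.le
    have hs0 : 0 ≤ (t - b⁻¹) / (a⁻¹ - b⁻¹) := div_nonneg (by linarith) hdc0.le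
    have hrs : (a⁻¹ - t) / (a⁻¹ - b⁻¹) + (t - b⁻¹) / (a⁻¹ - b⁻¹) = 1 := by
      rw [← add_div, div_eq_one_iff_eq hdc0.ne']
      ring
    have ht' : ((a⁻¹ - t) / (a⁻¹ - b⁻¹)) * b⁻¹ + ((t - b⁻¹) / (a⁻¹ - b⁻¹)) * a⁻¹ = t :=
      comb_aux hcd t
    have hcv := (convexOn_rpow_neg' (by linarith : (0:ℝ) ≤ p)).2
      (Set.mem_Ioi.2 hc0) (Set.mem_Ioi.2 hd0) hr0 hs0 hrs
    simp only [smul_eq_mul, ht'] at hcv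
    refine hcv.trans (le_of_eq ?_)
    exact chord_aux hcd t _ _
  -- integrability
  have hint1 : IntervalIntegrable (fun t : ℝ => t ^ (-p)) volume b⁻¹ a⁻¹ :=
    intervalIntegrable_rpow (Or.inr hnot)
  have hint2 : IntervalIntegrable (fun t : ℝ =>
      (b⁻¹:ℝ) ^ (-p) + (t - b⁻¹) * (((a⁻¹:ℝ) ^ (-p) - (b⁻¹:ℝ) ^ (-p)) / (a⁻¹ - b⁻¹)))
      volume b⁻¹ a⁻¹ := by
    apply IntervalIntegrable.add intervalIntegrable_const
    exact (IntervalIntegrable.sub intervalIntegral.intervalIntegrable_id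
      intervalIntegrable_const).mul_const _
  have key : (∫ t in b⁻¹..a⁻¹, t ^ (-p)) ≤ ∫ t in b⁻¹..a⁻¹,
      ((b⁻¹:ℝ) ^ (-p) + (t - b⁻¹) * (((a⁻¹:ℝ) ^ (-p) - (b⁻¹:ℝ) ^ (-p)) / (a⁻¹ - b⁻¹))) :=
    intervalIntegral.integral_mono_on hcd.le hint1 hint2 hpoint
  have hp1 : p - 1 ≠ 0 := by intro h; rw [sub_eq_zero] at h; exact absurd h.symm hp.ne
  -- values of rpow at inverses
  have hda : (a⁻¹:ℝ) ^ (-p + 1) = a ^ (p - 1) := by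
    rw [← Real.rpow_neg_one a, ← Real.rpow_mul ha.le]
    congr 1; ring
  have hcb : (b⁻¹:ℝ) ^ (-p + 1) = b ^ (p - 1) := by
    rw [← Real.rpow_neg_one b, ← Real.rpow_mul hb.le]
    congr 1; ring
  have hCval : (b⁻¹:ℝ) ^ (-p) = b ^ p := by
    rw [← Real.rpow_neg_one b, ← Real.rpow_mul hb.le]
    congr 1; ring
  have hDval : (a⁻¹:ℝ) ^ (-p) = a ^ p := by
    rw [← Real.rpow_neg_one a, ← Real.rpow_mul ha.le]
    congr 1; ring
  -- compute left integral
  have hleft : (∫ t in b⁻¹..a⁻¹, t ^ (-p)) = (b ^ (p - 1) - a ^ (p - 1)) / (p - 1) := by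
    rw [integral_rpow (Or.inr ⟨by intro h; rw [neg_eq_iff_eq_neg] at h; linarith [h], hnot⟩)]
    rw [hda, hcb]
    have h2 : -p + 1 = -(p - 1) := by ring
    rw [h2, div_neg, ← neg_div, neg_sub]
  -- compute right integral
  have hright : (∫ t in b⁻¹..a⁻¹,
      ((b⁻¹:ℝ) ^ (-p) + (t - b⁻¹) * (((a⁻¹:ℝ) ^ (-p) - (b⁻¹:ℝ) ^ (-p)) / (a⁻¹ - b⁻¹))))
      = (b - a) * (b ^ p + a ^ p) / (2 * a * b) := by
    have hgen : ∀ C K : ℝ, (∫ t in b⁻¹..a⁻¹, (C + (t - b⁻¹) * K))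
        = (a⁻¹ - b⁻¹) * C + (a⁻¹ - b⁻¹) ^ 2 / 2 * K := by
      intro C K
      have h1 : ∀ t : ℝ, C + (t - b⁻¹) * K = (C - b⁻¹ * K) + K * t := fun t => by ring
      simp_rw [h1]
      rw [intervalIntegral.integral_add intervalIntegrable_const
        (intervalIntegral.intervalIntegrable_id.const_mul K),
        intervalIntegral.integral_const, intervalIntegral.integral_const_mul, integral_id]
      simp only [smul_eq_mul]
      ring
    rw [hgen, hCval, hDval, lin_aux _ _ _ hdc0.ne', inv_sub_inv ha.ne' hb.ne']
    field_simp
  calc (b ^ (p - 1) - a ^ (p - 1)) / (p - 1) = ∫ t in b⁻¹..a⁻¹, t ^ (-p) := hleft.symm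
    _ ≤ _ := key
    _ = (b - a) * (b ^ p + a ^ p) / (2 * a * b) := hright
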